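/- Let μ be a completely mixed product-form CPT correlated equilibrium, i.e., μ ∈ I ∩ C_CPT with μ_i(s_i) > 0 for every player i and every s_i ∈ S_i. Then all the equilibrium incentive inequalities hold with equality: for every player i and every pair of strategies s_i, d_i ∈ S_i, V_i^{r_i(μ)}((μ_{−i}(s_{−i}))_{s_{−i}}, (h_i(s_i, s_{−i}))_{s_{−i}}) = V_i^{r_i(μ)}((μ_{−i}(s_{−i}))_{s_{−i}}, (h_i(d_i, s_{−i}))_{s_{−i}}), where μ_{−i}(s_{−i}) = Π_{j≠i} μ_j(s_j). -/
import Mathlib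


/-- The decision-weight form of the CPT value of the prospect `(p, z)`, indexed by
a finite type `κ`, with reference point `r`, value function `v`, probability
weighting functions `wp` (for gains) and `wm` (for losses), computed using a
bijection `a` enumerating the indices so that `z` is decreasing. -/
noncomputable def cptVal {κ : Type*} [Fintype κ] (wp wm v : ℝ → ℝ) (r : ℝ)
    (p z : κ → ℝ) (a : Fin (Fintype.card κ) ≃ κ) : ℝ :=
  ∑ j : Fin (Fintype.card κ),
    (if r ≤ z (a j) then
        wp (∑ k ∈ Finset.Iic j, p (a k)) - wp (∑ k ∈ Finset.Iio j, p (a k))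
      else
        wm (∑ k ∈ Finset.Ici j, p (a k)) - wm (∑ k ∈ Finset.Ioi j, p (a k)))
      * v (z (a j))

/-- A canonical enumeration of `κ` ordering `z` decreasingly. -/
noncomputable def sortingEquiv {κ : Type*} [Fintype κ] (z : κ → ℝ) :
    Fin (Fintype.card κ) ≃ κ :=
  (Tuple.sort (fun j => -z ((Fintype.equivFin κ).symm j)) : Equiv.Perm _).trans
    (Fintype.equivFin κ).symm

/-- The CPT value `V^r(p,z)` (independent of the choice of decreasing enumeration). -/
noncomputable def CPT {κ : Type*} [Fintype κ] (wp wm v : ℝ → ℝ) (r : ℝ)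
    (p z : κ → ℝ) : ℝ :=
  cptVal wp wm v r p z (sortingEquiv z)

/-- `μ` is a probability distribution on the finite type `κ`. -/
def IsProbDist {κ : Type*} [Fintype κ] (μ : κ → ℝ) : Prop :=
  (∀ s, 0 ≤ μ s) ∧ ∑ s, μ s = 1

/-- The joint strategy obtained when player `i` plays `si` and the other players
play according to `s'`. -/
def combine {ι : Type*} [DecidableEq ι] {S : ι → Type*} (i : ι) (si : S i)
    (s' : ∀ j : {j // j ≠ i}, S j) : ∀ j, S j :=
  fun j => if h : j = i then cast (congrArg S h.symm) si else s' ⟨j, h⟩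

/-- The marginal probability `μ_i(s_i)` of player `i` playing `si` under the joint
distribution `μ`. -/
noncomputable def marginal {ι : Type*} [Fintype ι] [DecidableEq ι] {S : ι → Type*}
    [∀ j, Fintype (S j)] [∀ j, DecidableEq (S j)]
    (μ : (∀ j, S j) → ℝ) (i : ι) (si : S i) : ℝ :=
  ∑ s' : ∀ j : {j // j ≠ i}, S j, μ (combine i si s')

/-- The conditional distribution `μ_{-i}^{s_i}` on the joint strategies of the
players other than `i`, given that player `i` is told to play `si`. -/
noncomputable def condDist {ι : Type*} [Fintype ι] [DecidableEq ι] {S : ι → Type*}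
    [∀ j, Fintype (S j)] [∀ j, DecidableEq (S j)]
    (μ : (∀ j, S j) → ℝ) (i : ι) (si : S i) :
    (∀ j : {j // j ≠ i}, S j) → ℝ :=
  fun s' => μ (combine i si s') / marginal μ i si

/-- `μ` is a CPT correlated equilibrium of the game with payoff functions `pay`,
probability weighting functions `wp i`, `wm i`, value function family `v i r`,
and reference functions `ref i`. -/
noncomputable def IsCPTCorrEq {ι : Type*} [Fintype ι] [DecidableEq ι] {S : ι → Type*}
    [∀ j, Fintype (S j)] [∀ j, DecidableEq (S j)]
    (pay : ∀ _ : ι, (∀ j, S j) → ℝ) (wp wm : ι → ℝ → ℝ) (v : ι → ℝ → ℝ → ℝ)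
    (ref : ι → ((∀ j, S j) → ℝ) → ℝ) (μ : (∀ j, S j) → ℝ) : Prop :=
  IsProbDist μ ∧
    ∀ (i : ι) (si di : S i), 0 < marginal μ i si →
      CPT (wp i) (wm i) (v i (ref i μ)) (ref i μ) (condDist μ i si)
          (fun s' => pay i (combine i di s'))
        ≤ CPT (wp i) (wm i) (v i (ref i μ)) (ref i μ) (condDist μ i si)
          (fun s' => pay i (combine i si s'))

/-- The product distribution `μ_{-i}` on the joint strategies of the players other
than `i`, `μ_{-i}(s_{-i}) = ∏_{j ≠ i} μ_j(s_j)`, where `μ_j` is the marginal of `μ`. -/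
noncomputable def prodOthers {ι : Type*} [Fintype ι] [DecidableEq ι] {S : ι → Type*}
    [∀ j, Fintype (S j)] [∀ j, DecidableEq (S j)]
    (μ : (∀ j, S j) → ℝ) (i : ι) : (∀ j : {j // j ≠ i}, S j) → ℝ :=
  fun s' => ∏ j : {j // j ≠ i}, marginal μ (j : ι) (s' j)

lemma combine_apply_self {ι : Type*} [DecidableEq ι] {S : ι → Type*} (i : ι) (si : S i)
    (s' : ∀ j : {j // j ≠ i}, S j) : combine i si s' i = si := by
  simp [combine]

lemma combine_apply_ne {ι : Type*} [DecidableEq ι] {S : ι → Type*} (i : ι) (si : S i)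
    (s' : ∀ j : {j // j ≠ i}, S j) (j : ι) (h : j ≠ i) :
    combine i si s' j = s' ⟨j, h⟩ := by
  simp [combine, h]

lemma condDist_eq_prodOthers {ι : Type*} [Fintype ι] [DecidableEq ι] {S : ι → Type*}
    [∀ j, Fintype (S j)] [∀ j, DecidableEq (S j)]
    (μ : (∀ j, S j) → ℝ)
    (hprod : ∀ s : ∀ j, S j, μ s = ∏ i, marginal μ i (s i))
    (hmixed : ∀ (i : ι) (si : S i), 0 < marginal μ i si)
    (i : ι) (si : S i) : condDist μ i si = prodOthers μ i := by
  funext s'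
  have key : μ (combine i si s') = marginal μ i si * prodOthers μ i s' := by
    rw [hprod]
    have h1 : (∏ j, marginal μ j (combine i si s' j))
        = marginal μ i (combine i si s' i) *
          ∏ j ∈ Finset.univ.erase i, marginal μ j (combine i si s' j) :=
      (Finset.mul_prod_erase Finset.univ _ (Finset.mem_univ i)).symm
    rw [h1, combine_apply_self]
    congr 1
    unfold prodOthers
    rw [Finset.prod_subtype (Finset.univ.erase i)
        (p := fun j => j ≠ i) (fun x => by simp)
        (fun j => marginal μ j (combine i si s' j))]
    exact Finset.prod_congr rfl fun j _ => by
      rw [combine_apply_ne i si s' j j.2]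
  unfold condDist
  rw [key]
  field_simp [(hmixed i si).ne']

/-- if `μ` is a completely mixed product-form CPT correlated
equilibrium, then all the equilibrium incentive inequalities hold with equality:
for every player `i` and every pair of strategies `si, di`, the CPT values of the
prospects faced by following `si` and by deviating to `di` (against the product
distribution `μ_{-i}`) coincide. -/
theorem completely_mixed_cpt_nash_indifference
    {ι : Type*} [Fintype ι] [DecidableEq ι] {S : ι → Type*}
    [∀ j, Fintype (S j)] [∀ j, DecidableEq (S j)]
    (pay : ∀ _ : ι, (∀ j, S j) → ℝ) (wp wm : ι → ℝ → ℝ) (v : ι → ℝ → ℝ → ℝ)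
    (ref : ι → ((∀ j, S j) → ℝ) → ℝ)
    (hcard : ∀ i, 2 ≤ Fintype.card (S i))
    (hwp : ∀ i, ContinuousOn (wp i) (Set.Icc 0 1) ∧ StrictMonoOn (wp i) (Set.Icc 0 1)
      ∧ wp i 0 = 0 ∧ wp i 1 = 1)
    (hwm : ∀ i, ContinuousOn (wm i) (Set.Icc 0 1) ∧ StrictMonoOn (wm i) (Set.Icc 0 1)
      ∧ wm i 0 = 0 ∧ wm i 1 = 1)
    (hv : ∀ i, Continuous (Function.uncurry (v i))
      ∧ ∀ r : ℝ, StrictMono (v i r) ∧ v i r r = 0)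
    (href : ∀ i, ContinuousOn (ref i) {μ : (∀ j, S j) → ℝ | IsProbDist μ})
    (μ : (∀ j, S j) → ℝ)
    (hCPT : IsCPTCorrEq pay wp wm v ref μ)
    (hprod : ∀ s : ∀ j, S j, μ s = ∏ i, marginal μ i (s i))
    (hmixed : ∀ (i : ι) (si : S i), 0 < marginal μ i si) :
    ∀ (i : ι) (si di : S i),
      CPT (wp i) (wm i) (v i (ref i μ)) (ref i μ) (prodOthers μ i)
          (fun s' => pay i (combine i si s'))
        = CPT (wp i) (wm i) (v i (ref i μ)) (ref i μ) (prodOthers μ i)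
          (fun s' => pay i (combine i di s')) := by
  intro i si di
  have h1 := hCPT.2 i si di (hmixed i si)
  have h2 := hCPT.2 i di si (hmixed i di)
  rw [condDist_eq_prodOthers μ hprod hmixed i si] at h1
  rw [condDist_eq_prodOthers μ hprod hmixed i di] at h2
  exact le_antisymm h2 h1
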